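/- For all natural numbers m, n one has Z(1,n) · X(m,1) = X(m,1)^{⊗n} · σ_{m,n} · Z(1,n)^{⊗m}; that is, the Z-spider (copy) and the X-spider (XOR) satisfy the bialgebra law, with the right-hand side the complete bipartite diagram (soundness of rule (BA1) of the phase-free ZH-calculus). -/

import Mathlib

/-- An `(m,n)`-qubit map: a complex matrix with rows indexed by output
bit strings of length `n` and columns indexed by input bit strings of length `m`. -/
abbrev QMap (m n : ℕ) : Type := Matrix (Fin n → Bool) (Fin m → Bool) ℂ

/-- Canonical identification of a pair of bit strings with a single bit string. -/
def bitEquiv (a b : ℕ) : ((Fin a → Bool) × (Fin b → Bool)) ≃ (Fin (a + b) → Bool) :=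
  (Equiv.sumArrowEquivProdArrow (Fin a) (Fin b) Bool).symm.trans
    (Equiv.arrowCongr finSumFinEquiv (Equiv.refl Bool))

/-- Kronecker (tensor) product of qubit maps, under the canonical identification. -/
def tens {m n m' n' : ℕ} (A : QMap m n) (B : QMap m' n') : QMap (m + m') (n + n') :=
  Matrix.reindex (bitEquiv n n') (bitEquiv m m') (Matrix.kroneckerMap (· * ·) A B)

/-- Transport a qubit map along equalities of the numbers of inputs and outputs. -/
def castQ {m m' n n' : ℕ} (hm : m = m') (hn : n = n') (A : QMap m n) : QMap m' n' :=
  Matrix.reindex (Equiv.arrowCongr (finCongr hn) (Equiv.refl Bool))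
    (Equiv.arrowCongr (finCongr hm) (Equiv.refl Bool)) A

/-- The Z-spider `Z(m,n)`: entry 1 iff all `m+n` bits are equal (all 0 or all 1). -/
def Zsp (m n : ℕ) : QMap m n := fun j i =>
  if ((∀ k, i k = false) ∧ (∀ k, j k = false)) ∨ ((∀ k, i k = true) ∧ (∀ k, j k = true))
  then 1 else 0

/-- The X-spider `X(m,n)`: entry 1 iff the sum mod 2 of all `m+n` bits is 0. -/
def Xsp (m n : ℕ) : QMap m n := fun j i =>
  if ((∑ k, (if i k then (1 : ZMod 2) else 0)) + ∑ k, (if j k then (1 : ZMod 2) else 0)) = 0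
  then 1 else 0

/-- The (phase-free) H-box `H(m,n)`: entry −1 iff all `m+n` bits are 1, else 1. -/
def Hbox (m n : ℕ) : QMap m n := fun j i =>
  if (∀ k, i k = true) ∧ (∀ k, j k = true) then -1 else 1

/-- The Hadamard gate `(1/√2)·[[1,1],[1,−1]]`. -/
noncomputable def Had : QMap 1 1 := fun j i =>
  (Real.sqrt 2 : ℂ)⁻¹ * (if i 0 = true ∧ j 0 = true then -1 else 1)

/-- The NOT gate `[[0,1],[1,0]]`. -/
def Xg : QMap 1 1 := fun j i => if j 0 = i 0 then 0 else 1

/-- The Z gate `diag(1,−1)`. -/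
def Zg : QMap 1 1 := fun j i => if j 0 = i 0 then (if i 0 = true then -1 else 1) else 0

/-- The triangle `[[1,1],[0,1]]` (row `j`, column `i`; the only zero entry is at `j=1, i=0`). -/
def Tri : QMap 1 1 := fun j i => if j 0 = true ∧ i 0 = false then 0 else 1

/-- The AND gate: `|x,y⟩ ↦ |x ∧ y⟩`. -/
def ANDg : QMap 2 1 := fun j i => if j 0 = (i 0 && i 1) then 1 else 0

/-- The swap of two qubits. -/
def swapQ : QMap 2 2 := fun j i => if j 0 = i 1 ∧ j 1 = i 0 then 1 else 0

/-- The cup `|00⟩ + |11⟩`. -/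
def cupQ : QMap 0 2 := fun j _ => if j 0 = j 1 then 1 else 0

/-- The cap `⟨00| + ⟨11|`. -/
def capQ : QMap 2 0 := fun _ i => if i 0 = i 1 then 1 else 0

/-- The scalar `1/√2` as a `(0,0)`-map. -/
noncomputable def starQ : QMap 0 0 := fun _ _ => (Real.sqrt 2 : ℂ)⁻¹

/-- `k`-fold tensor power of a qubit map. -/
def tpow {a b : ℕ} (A : QMap a b) : (k : ℕ) → QMap (a * k) (b * k)
  | 0 => (1 : QMap 0 0)
  | k + 1 => tens (tpow A k) A

/-- The wire in block `s` (of `b` blocks), at position `t` within the block (of size `a`). -/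
def wp {a b : ℕ} (s : Fin b) (t : Fin a) : Fin (a * b) :=
  ⟨a * s.val + t.val, by
    have ht := t.isLt
    have hs := s.isLt
    have h1 : a * s.val + t.val < a * (s.val + 1) := by rw [Nat.mul_succ]; omega
    exact lt_of_lt_of_le h1 (Nat.mul_le_mul (le_refl a) hs)⟩

/-- The permutation `σ_{m,n}` regrouping `m` blocks of `n` wires into `n` blocks of `m` wires:
it reindexes bit strings `g : Fin m × Fin n → Bool` to `(s,t) ↦ g(t,s)`. -/
def sigmaQ (m n : ℕ) : QMap (n * m) (m * n) := fun j i =>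
  if ∀ (s : Fin m) (t : Fin n), j (wp t s) = i (wp s t) then 1 else 0

namespace ZHaux


lemma apos {a b : ℕ} (k : Fin (a*b)) : 0 < a := by
  rcases Nat.eq_zero_or_pos a with h|h
  · exact absurd k.isLt (by simp [h])
  · exact h

def unwp {a b : ℕ} (k : Fin (a*b)) : Fin b × Fin a :=
  (⟨k.val / a, by
      rw [Nat.div_lt_iff_lt_mul (apos k)]
      exact Nat.lt_of_lt_of_eq k.isLt (Nat.mul_comm a b)⟩,
   ⟨k.val % a, Nat.mod_lt _ (apos k)⟩)

lemma wp_unwp {a b : ℕ} (k : Fin (a*b)) : wp (unwp k).1 (unwp k).2 = k := by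
  apply Fin.ext
  show a * (k.val / a) + k.val % a = k.val
  exact Nat.div_add_mod _ _

lemma unwp_wp {a b : ℕ} (s : Fin b) (t : Fin a) : unwp (wp s t) = (s, t) := by
  have ha : 0 < a := t.pos
  apply Prod.ext <;> apply Fin.ext
  · show (a * s.val + t.val) / a = s.val
    rw [Nat.mul_add_div ha, Nat.div_eq_of_lt t.isLt, Nat.add_zero]
  · show (a * s.val + t.val) % a = t.val
    rw [Nat.mul_add_mod, Nat.mod_eq_of_lt t.isLt]

lemma eq_iff_forall {a b : ℕ} (h' : Fin (a*b) → Bool) (f : Fin b → Fin a → Bool) :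
    (∀ s t, h' (wp s t) = f s t) ↔ h' = fun k => f (unwp k).1 (unwp k).2 := by
  constructor
  · intro H; funext k
    conv_lhs => rw [← wp_unwp k]
    exact H _ _
  · intro H s t; subst H; simp [unwp_wp]

lemma tens_apply {m n m' n' : ℕ} (A : QMap m n) (B : QMap m' n')
    (j : Fin (n + n') → Bool) (i : Fin (m + m') → Bool) :
    tens A B j i =
      A (fun u => j (Fin.castAdd n' u)) (fun u => i (Fin.castAdd m' u)) *
      B (fun u => j (Fin.natAdd n u)) (fun u => i (Fin.natAdd m u)) := by
  rfl





lemma tpow_apply {a b : ℕ} (A : QMap a b) (n : ℕ)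
    (j : Fin (b*n) → Bool) (i : Fin (a*n) → Bool) :
    tpow A n j i = ∏ t : Fin n, A (fun u => j (wp t u)) (fun u => i (wp t u)) := by
  induction n with
  | zero =>
    have hj : j = i := funext fun k => absurd k.isLt (by simp)
    simp [tpow, Matrix.one_apply, hj]
  | succ k ih =>
    rw [Fin.prod_univ_castSucc]
    rw [show (tpow A (k+1)) j i = _ from tens_apply (tpow A k) A j i, ih]
    congr 1





lemma castQ_apply {m m' n n' : ℕ} (hm : m = m') (hn : n = n') (A : QMap m n)
    (j : Fin n' → Bool) (i : Fin m' → Bool) :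
    castQ hm hn A j i = A (fun t => j (finCongr hn t)) (fun t => i (finCongr hm t)) := rfl

def pty {m : ℕ} (i : Fin m → Bool) : ZMod 2 := ∑ k, if i k then 1 else 0

lemma Xsp_m1 {m : ℕ} (b : Fin 1 → Bool) (i : Fin m → Bool) :
    Xsp m 1 b i = if pty i + (if b 0 then 1 else 0) = 0 then 1 else 0 := by
  unfold Xsp pty
  rw [Fin.sum_univ_one]

lemma Zsp_1n {n : ℕ} (jb : Fin n → Bool) (b : Fin 1 → Bool) :
    Zsp 1 n jb b = if (∀ t, jb t = b 0) then 1 else 0 := by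
  rcases hb : b 0 with _ | _ <;> simp [Zsp, Fin.forall_fin_one, hb]

lemma Arow {m n : ℕ} (j : Fin n → Bool) (h : Fin (m*n) → Bool) :
    castQ rfl (one_mul n) (tpow (Xsp m 1) n) j h =
      ∏ t : Fin n,
        (if pty (fun s => h (wp t s)) + (if j t then 1 else 0) = 0 then (1:ℂ) else 0) := by
  rw [castQ_apply, tpow_apply]
  simp only [finCongr_refl, Equiv.refl_apply]
  apply Finset.prod_congr rfl
  intro t _
  rw [Xsp_m1]
  congr 2
  have : (finCongr (one_mul n) (wp t (0 : Fin 1))) = t := by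
    apply Fin.ext; simp [wp]
  rw [this]

lemma Bcol {m n : ℕ} (h' : Fin (n*m) → Bool) (i : Fin m → Bool) :
    castQ (one_mul m) rfl (tpow (Zsp 1 n) m) h' i =
      if (∀ (s : Fin m) (t : Fin n), h' (wp s t) = i s) then 1 else 0 := by
  rw [castQ_apply, tpow_apply]
  simp only [finCongr_refl, Equiv.refl_apply]
  have : ∀ s : Fin m, Zsp 1 n (fun u => h' (wp s u)) (fun u => i (finCongr (one_mul m) (wp s u)))
      = if (∀ t, h' (wp s t) = i s) then (1:ℂ) else 0 := by
    intro s
    rw [Zsp_1n]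
    have : (finCongr (one_mul m) (wp s (0 : Fin 1))) = s := by
      apply Fin.ext; simp [wp]
    rw [this]
  rw [Finset.prod_congr rfl (fun s _ => this s), Finset.prod_boole]
  simp



end ZHaux

/-- the Z-spider (copy) and the X-spider (XOR) satisfy the bialgebra law
(soundness of rule (BA1)). -/
theorem zh_bialgebra_zx (m n : ℕ) :
    Zsp 1 n * Xsp m 1 =
      castQ rfl (one_mul n) (tpow (Xsp m 1) n) * sigmaQ m n *
        castQ (one_mul m) rfl (tpow (Zsp 1 n) m) := by
  ext j i
  have hRHS : (castQ rfl (one_mul n) (tpow (Xsp m 1) n) * sigmaQ m n *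
        castQ (one_mul m) rfl (tpow (Zsp 1 n) m)) j i
      = if (∀ t, ZHaux.pty i + (if j t then (1:ZMod 2) else 0) = 0) then 1 else 0 := by
    rw [Matrix.mul_apply]
    have hB : ∀ h', castQ (one_mul m) rfl (tpow (Zsp 1 n) m) h' i
        = if h' = (fun k => i (ZHaux.unwp k).1) then (1:ℂ) else 0 := by
      intro h'
      rw [ZHaux.Bcol, if_congr (ZHaux.eq_iff_forall h' (fun s _ => i s)) rfl rfl]
    simp only [hB, mul_ite, mul_one, mul_zero]
    rw [Finset.sum_ite_eq' Finset.univ (fun k => i (ZHaux.unwp k).1)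
      (fun h' => (castQ rfl (one_mul n) (tpow (Xsp m 1) n) * sigmaQ m n) j h'),
      if_pos (Finset.mem_univ _)]
    rw [Matrix.mul_apply]
    have hσ : ∀ h, sigmaQ m n h (fun k => i (ZHaux.unwp k).1)
        = if h = (fun k : Fin (m*n) => i (ZHaux.unwp k).2) then (1:ℂ) else 0 := by
      intro h
      unfold sigmaQ
      have h1 : (∀ (s : Fin m) (t : Fin n), h (wp t s) = (fun k => i (ZHaux.unwp k).1) (wp s t))
          ↔ ∀ (t : Fin n) (s : Fin m), h (wp t s) = i s := by
        simp only [ZHaux.unwp_wp]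
        exact forall_comm
      rw [if_congr (h1.trans (ZHaux.eq_iff_forall h (fun _ s => i s))) rfl rfl]
    simp only [hσ, mul_ite, mul_one, mul_zero]
    rw [Finset.sum_ite_eq' Finset.univ (fun k : Fin (m*n) => i (ZHaux.unwp k).2)
      (fun h => castQ rfl (one_mul n) (tpow (Xsp m 1) n) j h),
      if_pos (Finset.mem_univ _)]
    rw [ZHaux.Arow]
    simp only [ZHaux.unwp_wp]
    rw [Finset.prod_boole]
    simp
  rw [hRHS, Matrix.mul_apply]
  simp only [ZHaux.Zsp_1n, ZHaux.Xsp_m1]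
  rw [← Equiv.sum_comp (Equiv.funUnique (Fin 1) Bool).symm
    (fun x : Fin 1 → Bool => (if ∀ t, j t = x 0 then (1:ℂ) else 0) *
      (if ZHaux.pty i + (if x 0 then (1:ZMod 2) else 0) = 0 then 1 else 0))]
  simp only [Equiv.funUnique_symm_apply]
  rw [Fintype.sum_bool]
  have hp : ZHaux.pty i = 0 ∨ ZHaux.pty i = 1 := by
    have : ∀ x : ZMod 2, x = 0 ∨ x = 1 := by decide
    exact this _
  rcases hp with hp | hp <;> rw [hp]
  · have hc : ∀ (c : Bool), (((0:ZMod 2) + (if c then 1 else 0) = 0) ↔ c = false) := by decide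
    simp [hc, show (1:ZMod 2)+1 = 0 from by decide, show ((0:ZMod 2) ≠ 1) from by decide]
    exact if_congr Iff.rfl rfl rfl
  · have hc : ∀ (c : Bool), (((1:ZMod 2) + (if c then 1 else 0) = 0) ↔ c = true) := by decide
    simp [hc, show (1:ZMod 2)+1 = 0 from by decide, show ((0:ZMod 2) ≠ 1) from by decide]
    exact if_congr Iff.rfl rfl rfl
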